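/- One-dimensional optimal λn-embedding below the threshold (Proposition: Emb_n_Small): let w ∈ ℝ^N with w_i ≥ 0 for all i, let λₙ := λmax(L(w)), and assume the eigenspace of L(w) for the eigenvalue λₙ is one-dimensional and spanned by the vector (φ; 0) ∈ ℝ^n, where φ ∈ ℝ^N (φ padded with N zeros). Let V be an n×n real matrix and Y := VᵀV with ⟨Y, λₙ·I − L(w)⟩ = 0. Then there exists h ∈ ℝ^n such that the i-th column v_i of V satisfies v_i = φ_i·h for every 1 ≤ i ≤ N and v_i = 0 for every N+1 ≤ i ≤ n; i.e., the optimal embedding is one-dimensional, with the nodes of the first layer distributed along a line according to φ and the nodes of the second layer placed at the origin. -/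

import Mathlib

open Matrix

/-- Eigenvalues of a real symmetric matrix, listed in nondecreasing order with multiplicity
(junk value `0` if the matrix is not Hermitian). -/
noncomputable def sortedEigs {m : ℕ} (A : Matrix (Fin m) (Fin m) ℝ) : Fin m → ℝ :=
  if hA : A.IsHermitian then fun k => hA.eigenvalues (Tuple.sort hA.eigenvalues k) else 0

/-- The supra-Laplacian `L(w) = [[L1 + W, -W], [-W, L2 + W]]` of a two-layer multiplex,
as a matrix indexed by `Fin (N + N)`. -/
noncomputable def supraLap {N : ℕ} (L1 L2 : Matrix (Fin N) (Fin N) ℝ) (w : Fin N → ℝ) :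
    Matrix (Fin (N + N)) (Fin (N + N)) ℝ :=
  Matrix.reindex finSumFinEquiv finSumFinEquiv
    (Matrix.fromBlocks (L1 + Matrix.diagonal w) (-(Matrix.diagonal w))
      (-(Matrix.diagonal w)) (L2 + Matrix.diagonal w))

/-- The interlayer edge matrix `L_{i,i+N} = (δ_i - δ_{i+N})(δ_i - δ_{i+N})ᵀ`. -/
noncomputable def interE {N : ℕ} (i : Fin N) : Matrix (Fin (N + N)) (Fin (N + N)) ℝ :=
  Matrix.vecMulVec
    (Pi.single (Fin.castAdd N i) 1 - Pi.single (Fin.natAdd N i) 1)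
    (Pi.single (Fin.castAdd N i) 1 - Pi.single (Fin.natAdd N i) 1)

/-- The matrix inner product `⟨A, B⟩ = trace(AᵀB)`. -/
noncomputable def mip {m : ℕ} (A B : Matrix (Fin m) (Fin m) ℝ) : ℝ := (Aᵀ * B).trace

/-- The block-diagonal Laplacian `L0 = diag(L1, L2)` of the disjoint union of the layers. -/
noncomputable def L0big {N : ℕ} (L1 L2 : Matrix (Fin N) (Fin N) ℝ) :
    Matrix (Fin (N + N)) (Fin (N + N)) ℝ :=
  Matrix.reindex finSumFinEquiv finSumFinEquiv (Matrix.fromBlocks L1 0 0 L2)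

/-- The vector `z = (e; -e) ∈ ℝ^n`. -/
noncomputable def zvec (N : ℕ) : Fin (N + N) → ℝ :=
  fun k => if (k : ℕ) < N then 1 else -1

theorem auxHerm {N : ℕ} (L1 L2 : Matrix (Fin N) (Fin N) ℝ) (h1 : L1.IsHermitian)
    (h2 : L2.IsHermitian) (w : Fin N → ℝ) :
    (Matrix.reindex finSumFinEquiv finSumFinEquiv
    (Matrix.fromBlocks (L1 + Matrix.diagonal w) (-(Matrix.diagonal w))
      (-(Matrix.diagonal w)) (L2 + Matrix.diagonal w))).IsHermitian := by
  have : (Matrix.fromBlocks (L1 + Matrix.diagonal w) (-(Matrix.diagonal w))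
      (-(Matrix.diagonal w)) (L2 + Matrix.diagonal w)).IsHermitian :=
    IsHermitian.fromBlocks (h1.add (isHermitian_diagonal w)) (by simp)
      (h2.add (isHermitian_diagonal w))
  exact this.submatrix _

theorem auxPSD {m : ℕ} (A : Matrix (Fin m) (Fin m) ℝ) (hA : A.IsHermitian) (lam : ℝ)
    (hle : ∀ i, hA.eigenvalues i ≤ lam) :
    (lam • (1 : Matrix (Fin m) (Fin m) ℝ) - A).PosSemidef := by
  set U : Matrix (Fin m) (Fin m) ℝ := (hA.eigenvectorUnitary : Matrix (Fin m) (Fin m) ℝ) with hU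
  have hUU : U * star U = 1 := mem_unitaryGroup_iff.mp hA.eigenvectorUnitary.2
  have key : lam • (1 : Matrix (Fin m) (Fin m) ℝ) - A
      = U * diagonal (fun i => lam - hA.eigenvalues i) * star U := by
    conv_lhs => rw [hA.spectral_theorem, ← hUU]
    have : (diagonal (fun i => lam - hA.eigenvalues i) : Matrix (Fin m) (Fin m) ℝ)
        = lam • 1 - diagonal (RCLike.ofReal ∘ hA.eigenvalues) := by
      rw [← diagonal_one, ← diagonal_smul, diagonal_sub]
      ext i j; by_cases h : i = j <;> simp [h, Matrix.diagonal]
    rw [this]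
    rw [Matrix.mul_sub, Matrix.sub_mul, Matrix.mul_smul, Matrix.smul_mul, hUU]
    rw [Matrix.mul_one, hUU, hU]
    rw [Unitary.conjStarAlgAut_apply]
  rw [key]
  have : (diagonal (fun i => lam - hA.eigenvalues i) : Matrix (Fin m) (Fin m) ℝ).PosSemidef :=
    posSemidef_diagonal_iff.mpr fun i => by linarith [hle i]
  simpa [Matrix.star_eq_conjTranspose] using this.mul_mul_conjTranspose_same U

/-- trace (Bᵀ * B) = 0 → B = 0 for real matrices -/
theorem auxTrace {m : ℕ} (B : Matrix (Fin m) (Fin m) ℝ) (h : (Bᵀ * B).trace = 0) : B = 0 := by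
  have h' : ∑ j, ∑ k, (B k j)^2 = 0 := by
    rw [← h]
    simp [Matrix.trace, Matrix.diag, Matrix.mul_apply, sq]
  ext k j
  have hnn : ∀ j ∈ Finset.univ, (0:ℝ) ≤ ∑ k, (B k j)^2 :=
    fun j _ => Finset.sum_nonneg fun k _ => sq_nonneg _
  have := (Finset.sum_eq_zero_iff_of_nonneg hnn).mp h' j (Finset.mem_univ j)
  have := (Finset.sum_eq_zero_iff_of_nonneg
    (fun k _ => sq_nonneg (B k j))).mp this k (Finset.mem_univ k)
  simpa using pow_eq_zero_iff (n := 2) (by norm_num) |>.mp this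


private theorem stmtX (N : ℕ) (hN : 1 ≤ N)
    (L1 L2 : Matrix (Fin N) (Fin N) ℝ)
    (hL1 : L1.PosSemidef) (hL2 : L2.PosSemidef)
    (w : Fin N → ℝ)
    (lam : ℝ)
    (hlam : lam = (if hA : (Matrix.reindex finSumFinEquiv finSumFinEquiv
    (Matrix.fromBlocks (L1 + Matrix.diagonal w) (-(Matrix.diagonal w))
      (-(Matrix.diagonal w)) (L2 + Matrix.diagonal w))).IsHermitian then
      fun k => hA.eigenvalues (Tuple.sort hA.eigenvalues k) else 0) ⟨N + N - 1, Nat.sub_lt (by omega) Nat.one_pos⟩)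
    (φ : Fin N → ℝ)
    (hsimple : ∀ x : Fin (N + N) → ℝ,
      (Matrix.reindex finSumFinEquiv finSumFinEquiv
    (Matrix.fromBlocks (L1 + Matrix.diagonal w) (-(Matrix.diagonal w))
      (-(Matrix.diagonal w)) (L2 + Matrix.diagonal w))) *ᵥ x = lam • x →
      ∃ t : ℝ, x = t • (fun k => Sum.elim φ (fun _ => (0 : ℝ)) (finSumFinEquiv.symm k)))
    (V : Matrix (Fin (N + N)) (Fin (N + N)) ℝ)
    (hYs : (((Vᵀ * V)ᵀ) * (lam • (1 : Matrix (Fin (N + N)) (Fin (N + N)) ℝ) -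
      (Matrix.reindex finSumFinEquiv finSumFinEquiv
    (Matrix.fromBlocks (L1 + Matrix.diagonal w) (-(Matrix.diagonal w))
      (-(Matrix.diagonal w)) (L2 + Matrix.diagonal w))))).trace = 0) :
    ∃ h : Fin (N + N) → ℝ, ∀ i : Fin N,
      (fun k => V k (Fin.castAdd N i)) = φ i • h ∧
      (fun k => V k (Fin.natAdd N i)) = 0 := by
  set Lw := Matrix.reindex finSumFinEquiv finSumFinEquiv
    (Matrix.fromBlocks (L1 + Matrix.diagonal w) (-(Matrix.diagonal w))
      (-(Matrix.diagonal w)) (L2 + Matrix.diagonal w)) with hLw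
  have hH : Lw.IsHermitian := auxHerm L1 L2 hL1.1 hL2.1 w
  -- all eigenvalues ≤ lam
  have hmax : ∀ i, hH.eigenvalues i ≤ lam := by
    intro i
    rw [hlam, dif_pos hH]
    have hm := Tuple.monotone_sort hH.eigenvalues
    have hlt := ((Tuple.sort hH.eigenvalues)⁻¹ i).isLt
    have hle : (Tuple.sort hH.eigenvalues)⁻¹ i ≤ (⟨N + N - 1, by omega⟩ : Fin (N + N)) := by
      simp only [Fin.le_def, Fin.val_mk]
      omega
    have := hm hle
    simpa using this
  set M := lam • (1 : Matrix (Fin (N + N)) (Fin (N + N)) ℝ) - Lw with hM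
  have hPSD : M.PosSemidef := auxPSD Lw hH lam hmax
  -- V * M = 0
  have hVM : V * M = 0 := by
    open scoped MatrixOrder in
    have hSS : CFC.sqrt M * CFC.sqrt M = M := CFC.sqrt_mul_sqrt_self M hPSD.nonneg
    have hSH : (CFC.sqrt M).IsHermitian := (CFC.sqrt_nonneg M).posSemidef.1
    have htr : ((V * CFC.sqrt M)ᵀ * (V * CFC.sqrt M)).trace = 0 := by
      rw [Matrix.transpose_mul]
      have hSt : (CFC.sqrt M)ᵀ = CFC.sqrt M := by
        have := hSH.eq; simpa [Matrix.conjTranspose_eq_transpose_of_trivial] using this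
      rw [hSt]
      calc (CFC.sqrt M * Vᵀ * (V * CFC.sqrt M)).trace
          = ((Vᵀ * (V * CFC.sqrt M)) * CFC.sqrt M).trace := by
            rw [Matrix.mul_assoc]; exact Matrix.trace_mul_comm _ _
        _ = ((Vᵀ * V) * M).trace := by
            simp only [Matrix.mul_assoc]; rw [hSS]
        _ = 0 := by
            have : (Vᵀ * V)ᵀ = Vᵀ * V := by rw [Matrix.transpose_mul, Matrix.transpose_transpose]
            rw [← this]; exact hYs
    have := auxTrace _ htr
    calc V * M = V * (CFC.sqrt M * CFC.sqrt M) := by rw [hSS]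
      _ = (V * CFC.sqrt M) * CFC.sqrt M := by rw [Matrix.mul_assoc]
      _ = 0 := by rw [this, Matrix.zero_mul]
  -- each row of V is an eigenvector
  have hrow : ∀ k, ∃ t : ℝ, (fun l => V k l)
      = t • (fun j => Sum.elim φ (fun _ => (0 : ℝ)) (finSumFinEquiv.symm j)) := by
    intro k
    apply hsimple
    have hMsymm : Mᵀ = M := by
      have := hPSD.1.eq; simpa [Matrix.conjTranspose_eq_transpose_of_trivial] using this
    have hz : M *ᵥ (fun l => V k l) = 0 := by
      funext j'
      have h0 : (V * M) k j' = 0 := by rw [hVM]; rfl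
      calc (M *ᵥ fun l => V k l) j' = ∑ l, M j' l * V k l := rfl
        _ = ∑ l, V k l * M l j' := by
            refine Finset.sum_congr rfl fun l _ => ?_
            have : M j' l = M l j' := by
              conv_lhs => rw [← hMsymm]
              rfl
            rw [this]; ring
        _ = 0 := h0
    have : (lam • (1 : Matrix (Fin (N + N)) (Fin (N + N)) ℝ)) *ᵥ (fun l => V k l)
        - Lw *ᵥ (fun l => V k l) = 0 := by
      rw [← Matrix.sub_mulVec]; exact hz
    have h1 : (lam • (1 : Matrix (Fin (N + N)) (Fin (N + N)) ℝ)) *ᵥ (fun l => V k l)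
        = lam • (fun l => V k l) := by
      rw [Matrix.smul_mulVec, Matrix.one_mulVec]
    rw [h1] at this
    exact (sub_eq_zero.mp this).symm
  choose t ht using hrow
  refine ⟨t, fun i => ⟨?_, ?_⟩⟩
  · funext k
    have h2 := congrFun (ht k) (Fin.castAdd N i)
    simp only [finSumFinEquiv_symm_apply_castAdd, Sum.elim_inl, Pi.smul_apply,
      smul_eq_mul] at h2
    simp only [Pi.smul_apply, smul_eq_mul]
    rw [h2]; ring
  · funext k
    have h2 := congrFun (ht k) (Fin.natAdd N i)
    simp only [finSumFinEquiv_symm_apply_natAdd, Sum.elim_inr, Pi.smul_apply,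
      smul_eq_mul, mul_zero] at h2
    simpa using h2


/-- One-dimensional optimal `λₙ`-embedding below the threshold: if the eigenspace of
`L(w)` for `λₙ` is one-dimensional and spanned by `(φ; 0)`, and `Y = VᵀV` satisfies
`⟨Y, λₙ·I - L(w)⟩ = 0`, then there is `h ∈ ℝ^n` such that the columns of `V` are `φᵢ·h` on
the first layer and `0` on the second layer. -/
theorem stmt17 (N : ℕ) (hN : 1 ≤ N)
    (L1 L2 : Matrix (Fin N) (Fin N) ℝ)
    (hL1 : L1.PosSemidef) (hL2 : L2.PosSemidef)
    (hL1e : L1 *ᵥ (fun _ => (1 : ℝ)) = 0) (hL2e : L2 *ᵥ (fun _ => (1 : ℝ)) = 0)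
    (w : Fin N → ℝ) (hw : ∀ i, 0 ≤ w i)
    (lam : ℝ) (hlam : lam = sortedEigs (supraLap L1 L2 w) ⟨N + N - 1, by omega⟩)
    (φ : Fin N → ℝ) (hφ : φ ≠ 0)
    (hev : (supraLap L1 L2 w) *ᵥ
        (fun k => Sum.elim φ (fun _ => (0 : ℝ)) (finSumFinEquiv.symm k))
      = lam • (fun k => Sum.elim φ (fun _ => (0 : ℝ)) (finSumFinEquiv.symm k)))
    (hsimple : ∀ x : Fin (N + N) → ℝ, (supraLap L1 L2 w) *ᵥ x = lam • x →
      ∃ t : ℝ, x = t • (fun k => Sum.elim φ (fun _ => (0 : ℝ)) (finSumFinEquiv.symm k)))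
    (V : Matrix (Fin (N + N)) (Fin (N + N)) ℝ)
    (hYs : mip (Vᵀ * V)
      (lam • (1 : Matrix (Fin (N + N)) (Fin (N + N)) ℝ) - supraLap L1 L2 w) = 0) :
    ∃ h : Fin (N + N) → ℝ, ∀ i : Fin N,
      (fun k => V k (Fin.castAdd N i)) = φ i • h ∧
      (fun k => V k (Fin.natAdd N i)) = 0 := by
  unfold supraLap at hlam hsimple hYs
  unfold sortedEigs at hlam
  unfold mip at hYs
  exact stmtX N hN L1 L2 hL1 hL2 w lam hlam φ hsimple V hYs
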